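/- For t > 0, the function u(t,s) = 2t/(s² + 4t²) is positive on ℝ and satisfies the logarithmic diffusion equation ∂u/∂t = ∂²(log u)/∂s², and the associated curvature R(t,s) = −(1/u)·∂²(log u)/∂s² = (1/t)·(4t² − s²)/(4t² + s²) satisfies −1/t < R(t,s) ≤ 1/t with equality on the right exactly when s = 0. -/

import Mathlib

lemma denom_pos (t s : ℝ) (ht : 0 < t) : 0 < s ^ 2 + 4 * t ^ 2 := by positivity

lemma logderiv (t : ℝ) (ht : 0 < t) (s : ℝ) :
    HasDerivAt (fun s' => Real.log (2 * t / (s' ^ 2 + 4 * t ^ 2)))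
      (-2 * s / (s ^ 2 + 4 * t ^ 2)) s := by
  have hD := denom_pos t s ht
  have h1 : HasDerivAt (fun s' : ℝ => s' ^ 2 + 4 * t ^ 2) (2 * s) s := by
    simpa using (hasDerivAt_pow 2 s).add_const (4 * t ^ 2)
  have hf := (hasDerivAt_const s (2 * t)).div h1 hD.ne'
  have hval : 2 * t / (s ^ 2 + 4 * t ^ 2) ≠ 0 := by positivity
  have := hf.log hval
  simp only [Pi.div_apply] at this
  convert this using 1
  field_simp
  ring

lemma logderiv2 (t : ℝ) (ht : 0 < t) (s : ℝ) :
    HasDerivAt (fun s' => -2 * s' / (s' ^ 2 + 4 * t ^ 2))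
      ((2 * s ^ 2 - 8 * t ^ 2) / (s ^ 2 + 4 * t ^ 2) ^ 2) s := by
  have hD := denom_pos t s ht
  have h1 : HasDerivAt (fun s' : ℝ => s' ^ 2 + 4 * t ^ 2) (2 * s) s := by
    simpa using (hasDerivAt_pow 2 s).add_const (4 * t ^ 2)
  have hf := ((hasDerivAt_id s).const_mul (-2 : ℝ)).div h1 hD.ne'
  have hf' : HasDerivAt (fun s' : ℝ => -2 * s' / (s' ^ 2 + 4 * t ^ 2))
      ((-2 * 1 * (s ^ 2 + 4 * t ^ 2) - -2 * s * (2 * s)) / (s ^ 2 + 4 * t ^ 2) ^ 2) s := by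
    simpa [Pi.div_def] using hf
  convert hf' using 1
  ring

/-- The immortal Ricci flow on the punctured plane: `u(t,s) = 2t/(s² + 4t²)`
is positive for `t > 0`, solves `u_t = (log u)_{ss}`, and its curvature
`R = −u⁻¹(log u)_{ss}` equals `(1/t)(4t² − s²)/(4t² + s²)`, with
`−1/t < R ≤ 1/t` and equality on the right exactly when `s = 0`. -/
theorem stmt_14 (u R : ℝ → ℝ → ℝ)
    (hudef : ∀ t s, u t s = 2 * t / (s ^ 2 + 4 * t ^ 2))
    (hRdef : ∀ t s, R t s =
      -(1 / u t s) * deriv (fun s' => deriv (fun s'' => Real.log (u t s'')) s') s) :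
    ∀ t : ℝ, 0 < t → ∀ s : ℝ,
      0 < u t s ∧
      deriv (fun t' => u t' s) t =
        deriv (fun s' => deriv (fun s'' => Real.log (u t s'')) s') s ∧
      R t s = (1 / t) * ((4 * t ^ 2 - s ^ 2) / (4 * t ^ 2 + s ^ 2)) ∧
      -1 / t < R t s ∧ R t s ≤ 1 / t ∧ (R t s = 1 / t ↔ s = 0) := by
  intro t ht s
  have hD := denom_pos t s ht
  have h1 : (0:ℝ) < 4 * t ^ 2 + s ^ 2 := by positivity
  have hupos : 0 < u t s := by rw [hudef]; positivity
  have hinner : (fun s' => deriv (fun s'' => Real.log (u t s'')) s')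
      = fun s' => -2 * s' / (s' ^ 2 + 4 * t ^ 2) := by
    funext s'
    have heq : (fun s'' => Real.log (u t s''))
        = fun s'' => Real.log (2 * t / (s'' ^ 2 + 4 * t ^ 2)) := by
      funext x; rw [hudef]
    rw [heq, (logderiv t ht s').deriv]
  have houter : deriv (fun s' => deriv (fun s'' => Real.log (u t s'')) s') s
      = (2 * s ^ 2 - 8 * t ^ 2) / (s ^ 2 + 4 * t ^ 2) ^ 2 := by
    rw [hinner, (logderiv2 t ht s).deriv]
  have hut : deriv (fun t' => u t' s) t = (2 * s ^ 2 - 8 * t ^ 2) / (s ^ 2 + 4 * t ^ 2) ^ 2 := by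
    have heq : (fun t' => u t' s) = fun t' => 2 * t' / (s ^ 2 + 4 * t' ^ 2) := by
      funext x; rw [hudef]
    rw [heq]
    have h2 : HasDerivAt (fun t' : ℝ => s ^ 2 + 4 * t' ^ 2) (8 * t) t := by
      have := ((hasDerivAt_pow 2 t).const_mul (4:ℝ)).const_add (s ^ 2)
      simpa [mul_comm, mul_assoc, mul_left_comm] using this.congr_deriv (by ring)
    have hf := ((hasDerivAt_id t).const_mul (2 : ℝ)).div h2 hD.ne'
    have hf' : HasDerivAt (fun t' : ℝ => 2 * t' / (s ^ 2 + 4 * t' ^ 2))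
        ((2 * 1 * (s ^ 2 + 4 * t ^ 2) - 2 * t * (8 * t)) / (s ^ 2 + 4 * t ^ 2) ^ 2) t := by
      simpa [Pi.div_def] using hf
    rw [hf'.deriv]; ring
  have hR : R t s = (1 / t) * ((4 * t ^ 2 - s ^ 2) / (4 * t ^ 2 + s ^ 2)) := by
    rw [hRdef, houter, hudef]
    field_simp
    ring
  refine ⟨hupos, by rw [hut, houter], hR, ?_, ?_, ?_⟩
  · rw [hR]
    have hq : (-1:ℝ) < (4 * t ^ 2 - s ^ 2) / (4 * t ^ 2 + s ^ 2) := by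
      rw [lt_div_iff₀ h1]; nlinarith
    have hm := mul_lt_mul_of_pos_left hq (by positivity : (0:ℝ) < 1 / t)
    calc -1 / t = (1 / t) * (-1) := by ring
      _ < _ := hm
  · rw [hR]
    have hq : (4 * t ^ 2 - s ^ 2) / (4 * t ^ 2 + s ^ 2) ≤ 1 :=
      (div_le_one h1).mpr (by nlinarith)
    calc (1 / t) * ((4 * t ^ 2 - s ^ 2) / (4 * t ^ 2 + s ^ 2)) ≤ (1 / t) * 1 :=
          mul_le_mul_of_nonneg_left hq (by positivity)
      _ = 1 / t := by ring
  · rw [hR]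
    constructor
    · intro h
      have ht' : (1:ℝ) / t ≠ 0 := by positivity
      have h2 : (4 * t ^ 2 - s ^ 2) / (4 * t ^ 2 + s ^ 2) = 1 := by
        have := mul_left_cancel₀ ht' (h.trans (by ring : 1 / t = (1 / t) * 1))
        exact this
      have h3 := (div_eq_one_iff_eq h1.ne').mp h2
      have : s ^ 2 = 0 := by nlinarith
      exact pow_eq_zero_iff (by norm_num) |>.mp this
    · intro h; subst h; field_simp; ring
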